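/- arXiv:2504.18570 — 5 statements merged into one kernel-verified Lean document; each statement's English description precedes it below -/
import Mathlib

section
/- Let n be a positive integer, let x, z ∈ ℝⁿ with y := x − z ≠ 0, and let c ∈ ℝⁿ be such that d := c − (⟨c, y⟩/‖y‖²)·y ≠ 0 (i.e., c is not a scalar multiple of y). Define b := (‖y‖/‖d‖)·d and a := y + b. Then a satisfies the Residual Evasion Criterion ⟨a, a − 2y⟩ = 0, and hence ‖x − (z + a)‖ = ‖x − z‖. -/
open scoped RealInnerProductSpace

/-- Construction of a random undetectable attack vector (Proposition: λ = 1).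
With `y = x − z ≠ 0` and `d` the Gram–Schmidt orthogonal component of `c` with respect
to `y` assumed nonzero, the vector `a = y + (‖y‖/‖d‖)·d` satisfies the Residual Evasion
Criterion, hence leaves the primary residual unchanged. -/
theorem gram_schmidt_attack_is_residual_evasive (n : ℕ) (hn : 0 < n)
    (x z c : EuclideanSpace ℝ (Fin n))
    (y : EuclideanSpace ℝ (Fin n)) (hy : y = x - z) (hy0 : y ≠ 0)
    (d : EuclideanSpace ℝ (Fin n)) (hd : d = c - (⟪c, y⟫ / ‖y‖ ^ 2) • y) (hd0 : d ≠ 0)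
    (b : EuclideanSpace ℝ (Fin n)) (hb : b = (‖y‖ / ‖d‖) • d)
    (a : EuclideanSpace ℝ (Fin n)) (ha : a = y + b) :
    ⟪a, a - (2 : ℝ) • y⟫ = 0 ∧ ‖x - (z + a)‖ = ‖x - z‖ := by
  have hny : ‖y‖ ≠ 0 := norm_ne_zero_iff.mpr hy0
  have hnd : ‖d‖ ≠ 0 := norm_ne_zero_iff.mpr hd0
  have hdy : ⟪d, y⟫ = 0 := by
    rw [hd, inner_sub_left, real_inner_smul_left, real_inner_self_eq_norm_sq]
    field_simp
    ring
  have hby : ⟪b, y⟫ = 0 := by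
    rw [hb, real_inner_smul_left, hdy, mul_zero]
  have hyb : ⟪y, b⟫ = 0 := by rw [real_inner_comm]; exact hby
  have hbb : ⟪b, b⟫ = ⟪y, y⟫ := by
    rw [hb, real_inner_smul_left, real_inner_smul_right,
      real_inner_self_eq_norm_sq, real_inner_self_eq_norm_sq]
    field_simp
  have hkey : ⟪a, a - (2 : ℝ) • y⟫ = 0 := by
    rw [ha, inner_sub_right, inner_add_left, inner_add_right, inner_add_right,
      real_inner_smul_right, inner_add_left, hby, hyb, hbb]
    ring
  refine ⟨hkey, ?_⟩
  have hxa : x - (z + a) = -b := by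
    rw [ha]
    have : y + b = (x - z) + b := by rw [hy]
    rw [this]; abel
  rw [hxa, norm_neg, hb, norm_smul, ← hy]
  simp [abs_div, abs_of_nonneg (norm_nonneg y), abs_of_nonneg (norm_nonneg d),
    div_mul_cancel₀, hnd]
end

section
/- Let n be a positive integer, let d ∈ ℝⁿ, and let A be the real n × n matrix with A_{ij} = d_i if i = j and A_{ij} = 1 if i ≠ j. There exists x ∈ ℝⁿ with A·x = 0, x ≥ 0 (componentwise), and x ≠ 0 if and only if d_j < 1 for every j and Σ_{i=1}^{n} 1/(1 − d_i) = 1. -/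
/-- Lemma: for the matrix `A` with diagonal entries `d i` and off-diagonal entries `1`,
the system `Ax = 0, x ≥ 0, x ≠ 0` is feasible iff `d j < 1` for every `j` and
`∑ i, 1/(1 − d i) = 1`. -/
theorem special_matrix_nonneg_kernel_iff (n : ℕ) (hn : 0 < n) (d : Fin n → ℝ)
    (A : Matrix (Fin n) (Fin n) ℝ)
    (hA : ∀ i j, A i j = if i = j then d i else 1) :
    (∃ x : Fin n → ℝ, A.mulVec x = 0 ∧ (∀ i, 0 ≤ x i) ∧ x ≠ 0) ↔
      ((∀ j, d j < 1) ∧ ∑ i, 1 / (1 - d i) = 1) := by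
  have key : ∀ x : Fin n → ℝ, ∀ i, A.mulVec x i = (d i - 1) * x i + ∑ j, x j := by
    intro x i
    simp only [Matrix.mulVec, dotProduct, hA]
    have : ∀ j : Fin n, (if i = j then d i else 1) * x j
        = (if i = j then (d i - 1) * x j else 0) + x j := by
      intro j
      by_cases h : i = j <;> simp [h] <;> ring
    rw [Finset.sum_congr rfl fun j _ => this j, Finset.sum_add_distrib,
      Finset.sum_ite_eq (Finset.univ) i (fun j => (d i - 1) * x j)]
    simp
  constructor
  · rintro ⟨x, hx, hxn, hxne⟩
    have hk : ∃ k, 0 < x k := by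
      by_contra h
      push_neg at h
      exact hxne (funext fun i => le_antisymm (h i) (hxn i))
    obtain ⟨k, hk⟩ := hk
    have hS : 0 < ∑ j, x j :=
      Finset.sum_pos' (fun i _ => hxn i) ⟨k, Finset.mem_univ k, hk⟩
    have heq : ∀ i, (1 - d i) * x i = ∑ j, x j := by
      intro i
      have h := congrFun hx i
      rw [key] at h
      have h0 : (0 : Fin n → ℝ) i = 0 := rfl
      rw [h0] at h
      nlinarith [h]
    have hd : ∀ i, d i < 1 := by
      intro i
      by_contra h
      push_neg at h
      have h1 : (1 - d i) * x i ≤ 0 :=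
        mul_nonpos_of_nonpos_of_nonneg (by linarith) (hxn i)
      linarith [heq i]
    refine ⟨hd, ?_⟩
    have hrw : ∀ i, 1 / (1 - d i) = x i / (∑ j, x j) := by
      intro i
      have h1 : (0:ℝ) < 1 - d i := by linarith [hd i]
      rw [eq_div_iff hS.ne', div_mul_eq_mul_div, eq_comm, eq_div_iff h1.ne']
      nlinarith [heq i]
    rw [Finset.sum_congr rfl fun i _ => hrw i, ← Finset.sum_div, div_self hS.ne']
  · rintro ⟨hd, hsum⟩
    refine ⟨fun i => 1 / (1 - d i), ?_, ?_, ?_⟩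
    · funext i
      rw [key, hsum]
      have h1 : (0:ℝ) < 1 - d i := by linarith [hd i]
      have h0 : (0 : Fin n → ℝ) i = 0 := rfl
      rw [h0]
      field_simp
      ring
    · intro i
      have h1 : (0:ℝ) < 1 - d i := by linarith [hd i]
      positivity
    · intro h
      have h1 : (0:ℝ) < 1 - d ⟨0, hn⟩ := by linarith [hd ⟨0, hn⟩]
      have := congrFun h ⟨0, hn⟩
      simp only [Pi.zero_apply, div_eq_zero_iff] at this
      rcases this with h2 | h2
      · norm_num at h2
      · linarith
end

section
/- Let n be a positive integer, let d ∈ ℝⁿ, and let A be the real n × n matrix with A_{ij} = d_i if i = j and A_{ij} = 1 if i ≠ j. If y ∈ ℝⁿ satisfies A·y = 0, y ≥ 0 (componentwise), and eᵀy = 1, then for every j one has d_j < 1 and y_j = 1/(1 − d_j); in particular, such a solution is unique. -/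
/-- Uniqueness: any solution `y` of `Ay = 0, y ≥ 0, eᵀy = 1` for the matrix `A` with
diagonal `d` and off-diagonal entries `1` must satisfy `d j < 1` and
`y j = 1/(1 − d j)` for every `j`. -/
theorem unique_solution_special_matrix (n : ℕ) (hn : 0 < n) (d : Fin n → ℝ)
    (A : Matrix (Fin n) (Fin n) ℝ)
    (hA : ∀ i j, A i j = if i = j then d i else 1)
    (y : Fin n → ℝ) (hker : A.mulVec y = 0) (hnn : ∀ i, 0 ≤ y i)
    (hsum : ∑ i, y i = 1) :
    ∀ j, d j < 1 ∧ y j = 1 / (1 - d j) := by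
  intro j
  have hrow := congrFun hker j
  simp only [Matrix.mulVec, dotProduct, Pi.zero_apply] at hrow
  have hrow' : ∑ i, (if j = i then d j * y i else 1 * y i) = 0 := by
    rw [← hrow]; apply Finset.sum_congr rfl; intro i _
    rw [hA]; split <;> simp
  have hrow2 : d j * y j + ∑ i ∈ Finset.univ.erase j, y i = 0 := by
    rw [← hrow', ← Finset.add_sum_erase Finset.univ _ (Finset.mem_univ j), if_pos rfl]
    congr 1
    apply Finset.sum_congr rfl
    intro i hi
    rw [if_neg (Ne.symm (Finset.mem_erase.mp hi).1), one_mul]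
  have herase : ∑ i ∈ Finset.univ.erase j, y i = 1 - y j := by
    have := Finset.add_sum_erase Finset.univ y (Finset.mem_univ j)
    linarith [hsum, this]
  rw [herase] at hrow2
  -- hrow2 : d j * y j + (1 - y j) = 0
  have hy : y j * (1 - d j) = 1 := by linarith
  have hypos : 0 < y j := by
    rcases lt_or_eq_of_le (hnn j) with h | h
    · exact h
    · exfalso; rw [← h] at hy; simp at hy
  have hd : d j < 1 := by nlinarith
  refine ⟨hd, ?_⟩
  rw [eq_div_iff (by linarith : (1:ℝ) - d j ≠ 0)]
  linarith
end

section
/- Let n be a positive integer and let a, y ∈ ℝⁿ with y ≠ 0 and a_j ≠ y_j for every j. Suppose there exist signs ε_j ∈ {−1, +1} such that the vector c ∈ ℝⁿ defined by c_j := ε_j·(a_j − y_j)/‖y‖ satisfies ⟨c, y⟩ = 0. Then the vector a′ := y + (‖y‖/‖c‖)·c satisfies the Residual Evasion Criterion ⟨a′, a′ − 2y⟩ = 0; in particular, with y = x − z, the attack z_a = z + a′ leaves the primary residual unchanged: ‖x − (z + a′)‖ = ‖x − z‖. -/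
open scoped RealInnerProductSpace

/-- Theorem (sign choice): if for some choice of signs `ε j ∈ {−1, +1}` the vector
`c` with `c j = ε j · (a j − y j)/‖y‖` is orthogonal to `y`, then the attack
`a′ = y + (‖y‖/‖c‖)·c` satisfies the Residual Evasion Criterion; in particular, with
`y = x − z`, the attack `z + a′` leaves the primary residual unchanged. -/
theorem sign_choice_attack_evasive (n : ℕ) (hn : 0 < n)
    (a y : EuclideanSpace ℝ (Fin n)) (hy0 : y ≠ 0) (hne : ∀ j, a j ≠ y j)
    (ε : Fin n → ℝ) (hε : ∀ j, ε j = 1 ∨ ε j = -1)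
    (c : EuclideanSpace ℝ (Fin n)) (hc : ∀ j, c j = ε j * (a j - y j) / ‖y‖)
    (hortho : ⟪c, y⟫ = 0)
    (a' : EuclideanSpace ℝ (Fin n)) (ha' : a' = y + (‖y‖ / ‖c‖) • c) :
    ⟪a', a' - (2 : ℝ) • y⟫ = 0 ∧
      ∀ x z : EuclideanSpace ℝ (Fin n), y = x - z → ‖x - (z + a')‖ = ‖x - z‖ := by
  have hyn : ‖y‖ ≠ 0 := norm_ne_zero_iff.mpr hy0
  have hc0 : c ≠ 0 := by
    intro h
    have j : Fin n := ⟨0, hn⟩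
    have hcj : c j = 0 := by rw [h]; rfl
    rw [hc j] at hcj
    have hεj : ε j ≠ 0 := by rcases hε j with h1 | h1 <;> rw [h1] <;> norm_num
    have := sub_ne_zero.mpr (hne j)
    field_simp at hcj
    rw [mul_zero] at hcj
    exact mul_ne_zero hεj this hcj
  have hcn : ‖c‖ ≠ 0 := norm_ne_zero_iff.mpr hc0
  set w : EuclideanSpace ℝ (Fin n) := (‖y‖ / ‖c‖) • c with hw
  have hwnorm : ‖w‖ = ‖y‖ := by
    rw [hw, norm_smul, Real.norm_eq_abs, abs_div, abs_norm, abs_norm]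
    field_simp
  have hwy : ⟪w, y⟫ = 0 := by
    rw [hw, real_inner_smul_left, hortho, mul_zero]
  have hyw : ⟪y, w⟫ = 0 := by rw [real_inner_comm]; exact hwy
  have key : ⟪a', a' - (2 : ℝ) • y⟫ = 0 := by
    rw [ha']
    have : y + w - (2 : ℝ) • y = w - y := by
      simp [two_smul]
    rw [this, inner_add_left, inner_sub_right, inner_sub_right,
      real_inner_self_eq_norm_sq, real_inner_self_eq_norm_sq, hyw, hwy, hwnorm]
    ring
  refine ⟨key, fun x z hxz => ?_⟩
  have : x - (z + a') = y - a' := by rw [hxz]; abel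
  rw [this, ha', ← hxz]
  have : y - (y + w) = -w := by abel
  rw [this, norm_neg, hwnorm]
end

section
/- Let n be a positive integer and let y, c ∈ ℝⁿ with y ≠ 0, c ≠ 0, c_i ≠ 0 for every i, and ⟨c, y⟩ = 0. Define a := y + (‖y‖/‖c‖)·c, d_i := 1 − ‖y‖²/(a_i − y_i)², and let A be the real n × n matrix with A_{ij} = d_i if i = j and A_{ij} = 1 if i ≠ j. Then the componentwise-square vector c² := (c_1², …, c_n²) satisfies A·(c²) = 0, and a satisfies the Residual Evasion Criterion ⟨a, a − 2y⟩ = 0. -/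
open scoped RealInnerProductSpace

/-- Theorem (system for `c`): for `y ≠ 0`, `c ≠ 0` with all components nonzero and
`c ⊥ y`, the attack `a = y + (‖y‖/‖c‖)·c` yields coefficients
`d i = 1 − ‖y‖²/(a i − y i)²` such that the componentwise square of `c` lies in the
kernel of the matrix with diagonal `d` and off-diagonal entries `1`, and `a` satisfies
the Residual Evasion Criterion. -/
theorem system_for_c_and_evasive (n : ℕ) (hn : 0 < n)
    (y c : EuclideanSpace ℝ (Fin n)) (hy0 : y ≠ 0) (hc0 : c ≠ 0)
    (hci : ∀ i, c i ≠ 0) (hortho : ⟪c, y⟫ = 0)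
    (a : EuclideanSpace ℝ (Fin n)) (ha : a = y + (‖y‖ / ‖c‖) • c)
    (d : Fin n → ℝ) (hd : ∀ i, d i = 1 - ‖y‖ ^ 2 / (a i - y i) ^ 2)
    (A : Matrix (Fin n) (Fin n) ℝ)
    (hA : ∀ i j, A i j = if i = j then d i else 1) :
    A.mulVec (fun i => (c i) ^ 2) = 0 ∧ ⟪a, a - (2 : ℝ) • y⟫ = 0 := by
  have hyn : ‖y‖ ≠ 0 := norm_ne_zero_iff.mpr hy0
  have hcn : ‖c‖ ≠ 0 := norm_ne_zero_iff.mpr hc0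
  have hcsum : ‖c‖ ^ 2 = ∑ i, c i ^ 2 := by
    rw [EuclideanSpace.norm_eq, Real.sq_sqrt (by positivity)]
    simp [sq_abs]
  have hai : ∀ i, a i - y i = (‖y‖ / ‖c‖) * c i := by
    intro i
    rw [ha]
    simp [PiLp.add_apply, PiLp.smul_apply, smul_eq_mul]
  constructor
  · funext i
    have hdi : d i = 1 - ‖c‖ ^ 2 / c i ^ 2 := by
      rw [hd i, hai i]
      rw [mul_pow, div_pow]
      have h2 : c i ^ 2 ≠ 0 := pow_ne_zero 2 (hci i)
      field_simp
    have : (A.mulVec fun i => c i ^ 2) i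
        = ∑ j, ((c j ^ 2) + if i = j then (d i - 1) * c j ^ 2 else 0) := by
      simp only [Matrix.mulVec, dotProduct, hA]
      congr 1; funext j
      by_cases h : i = j <;> simp [h] <;> ring
    rw [this, Finset.sum_add_distrib, Finset.sum_ite_eq, if_pos (Finset.mem_univ i)]
    have : (0 : (fun _ => ℝ) i) = (0 : ℝ) := rfl
    rw [Pi.zero_apply, ← hcsum, hdi]
    have h2 : c i ^ 2 ≠ 0 := pow_ne_zero 2 (hci i)
    rw [sub_sub_cancel_left, neg_mul, div_mul_cancel₀ _ h2]
    ring
  · have hay : ⟪a, y⟫ = ‖y‖ ^ 2 := by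
      rw [ha, inner_add_left, real_inner_smul_left, hortho,
        real_inner_self_eq_norm_sq]
      ring
    have hna : ‖a‖ ^ 2 = 2 * ‖y‖ ^ 2 := by
      have hyc : ⟪y, c⟫ = 0 := by rw [real_inner_comm]; exact hortho
      rw [ha, norm_add_sq_real, real_inner_smul_right, hyc,
        norm_smul, Real.norm_eq_abs, abs_div, abs_norm, abs_norm, mul_pow, div_pow,
        div_mul_cancel₀ _ (pow_ne_zero 2 hcn)]
      ring
    rw [inner_sub_right, real_inner_smul_right, real_inner_self_eq_norm_sq, hna, hay]
    ring
end
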